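/- Let X be an L×N real matrix, V an N×N diagonal matrix with positive diagonal entries, γ > 0, u > 0 a scalar, and x ∈ ℝ^L. Then u XᵀX + γ V is invertible, u X(XV⁻¹)ᵀ + γ I_L is invertible, and u (u XᵀX + γ V)⁻¹ Xᵀ x = u (X V⁻¹)ᵀ (u X (X V⁻¹)ᵀ + γ I_L)⁻¹ x. -/

import Mathlib

open Matrix

lemma arss_psd_smul {n : ℕ} {M : Matrix (Fin n) (Fin n) ℝ} (hM : M.PosSemidef)
    {u : ℝ} (hu : 0 ≤ u) : (u • M).PosSemidef := by
  constructor
  · show (u • M)ᴴ = u • M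
    rw [conjTranspose_smul, hM.1.eq]
    simp
  · intro x
    exact (hM.smul hu).2 x

lemma arss_pd_smul {n : ℕ} {M : Matrix (Fin n) (Fin n) ℝ} (hM : M.PosDef)
    {u : ℝ} (hu : 0 < u) : (u • M).PosDef := by
  constructor
  · show (u • M)ᴴ = u • M
    rw [conjTranspose_smul, hM.1.eq]
    simp
  · intro x hx
    exact (hM.smul hu).2 hx

theorem arss_theorem2 (L N : ℕ) (X : Matrix (Fin L) (Fin N) ℝ)
    (V : Matrix (Fin N) (Fin N) ℝ) (hVdiag : ∀ i j, i ≠ j → V i j = 0)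
    (hVpos : ∀ i, 0 < V i i) (γ u : ℝ) (hγ : 0 < γ) (hu : 0 < u) (x : Fin L → ℝ) :
    IsUnit (u • (Xᵀ * X) + γ • V) ∧
    IsUnit (u • (X * (X * V⁻¹)ᵀ) + γ • (1 : Matrix (Fin L) (Fin L) ℝ)) ∧
    u • ((u • (Xᵀ * X) + γ • V)⁻¹ * Xᵀ).mulVec x
      = u • ((X * V⁻¹)ᵀ * (u • (X * (X * V⁻¹)ᵀ) + γ • (1 : Matrix (Fin L) (Fin L) ℝ))⁻¹).mulVec x := by
  have hV : V = diagonal (fun i => V i i) := by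
    ext i j
    by_cases h : i = j
    · subst h; simp
    · simp [diagonal, h, hVdiag i j h]
  have hVinv : V⁻¹ = diagonal (fun i => (V i i)⁻¹) := by
    apply Matrix.inv_eq_right_inv
    nth_rewrite 1 [hV]
    rw [diagonal_mul_diagonal]
    have h1 : (fun i => V i i * (V i i)⁻¹) = fun _ => (1 : ℝ) :=
      funext fun i => mul_inv_cancel₀ (hVpos i).ne'
    rw [h1, diagonal_one]
  have hVPD : V.PosDef := hV ▸ Matrix.PosDef.diagonal hVpos
  have hVinvPD : V⁻¹.PosDef := hVinv ▸ Matrix.PosDef.diagonal (fun i => inv_pos.mpr (hVpos i))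
  have hVsym : V⁻¹ᵀ = V⁻¹ := by rw [hVinv, diagonal_transpose]
  have hVdet : IsUnit V.det := (Matrix.isUnit_iff_isUnit_det V).mp hVPD.isUnit
  have hVmul : V * V⁻¹ = 1 := Matrix.mul_nonsing_inv V hVdet
  have hXV : (X * V⁻¹)ᵀ = V⁻¹ * Xᵀ := by rw [transpose_mul, hVsym]
  -- positive semidefiniteness of XᵀX
  have hPSD1 : (Xᵀ * X).PosSemidef := by
    have := Matrix.posSemidef_conjTranspose_mul_self X
    rwa [conjTranspose_eq_transpose_of_trivial] at this
  have hPSD2 : (X * (X * V⁻¹)ᵀ).PosSemidef := by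
    have := hVinvPD.posSemidef.mul_mul_conjTranspose_same X
    rw [conjTranspose_eq_transpose_of_trivial] at this
    rwa [hXV, ← Matrix.mul_assoc]
  set A := u • (Xᵀ * X) + γ • V with hAdef
  set B := u • (X * (X * V⁻¹)ᵀ) + γ • (1 : Matrix (Fin L) (Fin L) ℝ) with hBdef
  have hA : A.PosDef := Matrix.PosDef.posSemidef_add (arss_psd_smul hPSD1 hu.le) (arss_pd_smul hVPD hγ)
  have hB : B.PosDef :=
    Matrix.PosDef.posSemidef_add (arss_psd_smul hPSD2 hu.le) (arss_pd_smul Matrix.PosDef.one hγ)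
  refine ⟨hA.isUnit, hB.isUnit, ?_⟩
  have hAdet : IsUnit A.det := (Matrix.isUnit_iff_isUnit_det A).mp hA.isUnit
  have hBdet : IsUnit B.det := (Matrix.isUnit_iff_isUnit_det B).mp hB.isUnit
  have hVX : V * (V⁻¹ * Xᵀ) = Xᵀ := by rw [← Matrix.mul_assoc, hVmul, Matrix.one_mul]
  have key : A * (V⁻¹ * Xᵀ) = Xᵀ * B := by
    rw [hAdef, hBdef, Matrix.add_mul, Matrix.mul_add, Matrix.smul_mul, Matrix.smul_mul,
      Matrix.mul_smul, Matrix.mul_smul, Matrix.mul_one, hVX, hXV, Matrix.mul_assoc]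
  have h1 : A⁻¹ * Xᵀ = V⁻¹ * Xᵀ * B⁻¹ := by
    have h2 : A⁻¹ * (A * (V⁻¹ * Xᵀ)) = A⁻¹ * (Xᵀ * B) := by rw [key]
    rw [Matrix.nonsing_inv_mul_cancel_left _ _ hAdet] at h2
    rw [h2, ← Matrix.mul_assoc, Matrix.mul_nonsing_inv_cancel_right _ _ hBdet]
  rw [hXV, ← h1]
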